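/- Let I be a principal ideal of the Laurent polynomial ring generated by a Laurent polynomial h which is not a monomial. Then the tropical variety T(I) = {w ∈ ℝ^d : init_w(h) is not a monomial} equals the union of the cones of codimension at least one in the inner normal fan of the Newton polytope N(h); equivalently, w ∈ T(I) if and only if the face of N(h) minimizing ⟨w,·⟩ has at least two vertices. -/

import Mathlib

open scoped Classical

def AMAtoF {K : Type*} [Field K] {d : ℕ} (f : AddMonoidAlgebra K (Fin d → ℤ)) :
    (Fin d → ℤ) →₀ K := f.coeff

noncomputable def pairZ {d : ℕ} (w : Fin d → ℝ) (a : Fin d → ℤ) : ℝ := ∑ i, w i * (a i : ℝ)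

noncomputable def dotR {d : ℕ} (w q : Fin d → ℝ) : ℝ := ∑ i, w i * q i

/-- The initial form `init_w(g)` of a Laurent polynomial. -/
noncomputable def initForm {K : Type*} [Field K] {d : ℕ} (w : Fin d → ℝ)
    (g : (Fin d → ℤ) →₀ K) : (Fin d → ℤ) →₀ K :=
  g.filter (fun a => ∀ b ∈ g.support, pairZ w a ≤ pairZ w b)

/-- The embedding `ℤ^d → ℝ^d`. -/
noncomputable def latt {d : ℕ} (a : Fin d → ℤ) : Fin d → ℝ := fun i => (a i : ℝ)

/-- `face_w(Q)`: the face of a set `Q ⊆ ℝ^d` in direction `w`, i.e. the points of `Q`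
minimizing `⟨w, ·⟩` over `Q`. -/
def faceSet {d : ℕ} (w : Fin d → ℝ) (Q : Set (Fin d → ℝ)) : Set (Fin d → ℝ) :=
  {q ∈ Q | ∀ p ∈ Q, dotR w q ≤ dotR w p}

/-! ### Auxiliary material -/

open scoped Pointwise

/-- The identity map from finitely supported functions back to the Laurent polynomial ring. -/
def F2A {K : Type*} [Field K] {d : ℕ} (f : (Fin d → ℤ) →₀ K) :
    AddMonoidAlgebra K (Fin d → ℤ) := AddMonoidAlgebra.ofCoeff f

section Aux

variable {K : Type*} [Field K] {d : ℕ}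

lemma pairZ_add (w : Fin d → ℝ) (a b : Fin d → ℤ) :
    pairZ w (a + b) = pairZ w a + pairZ w b := by
  simp [pairZ, mul_add, Finset.sum_add_distrib]

lemma pairZ_neg (w : Fin d → ℝ) (a : Fin d → ℤ) : pairZ (-w) a = - pairZ w a := by
  simp [pairZ]

lemma dot_latt (w : Fin d → ℝ) (a : Fin d → ℤ) : dotR w (latt a) = pairZ w a := rfl

lemma latt_inj {a b : Fin d → ℤ} (hab : latt a = latt b) : a = b :=
  funext fun i => Int.cast_injective (congrFun hab i)

lemma pairZ_single (i : Fin d) (b : Fin d → ℤ) :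
    pairZ (Pi.single i (1:ℝ)) b = (b i : ℝ) := by
  rw [pairZ, Finset.sum_eq_single i]
  · simp
  · intro j _ hj; simp [Pi.single_apply, hj]
  · simp

lemma mem_initForm_support (w : Fin d → ℝ) (g : (Fin d → ℤ) →₀ K) (a : Fin d → ℤ) :
    a ∈ (initForm w g).support ↔
      a ∈ g.support ∧ ∀ b ∈ g.support, pairZ w a ≤ pairZ w b := by
  classical
  rw [initForm, Finsupp.support_filter, Finset.mem_filter]

lemma initForm_apply_of (w : Fin d → ℝ) (g : (Fin d → ℤ) →₀ K) (a : Fin d → ℤ)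
    (ha : ∀ b ∈ g.support, pairZ w a ≤ pairZ w b) : initForm w g a = g a := by
  classical
  rw [initForm, Finsupp.filter_apply, if_pos ha]

lemma initForm_apply_not (w : Fin d → ℝ) (g : (Fin d → ℤ) →₀ K) (a : Fin d → ℤ)
    (ha : ¬ ∀ b ∈ g.support, pairZ w a ≤ pairZ w b) : initForm w g a = 0 := by
  classical
  rw [initForm, Finsupp.filter_apply, if_neg ha]

lemma exists_min_supp (w : Fin d → ℝ) (g : (Fin d → ℤ) →₀ K) (hg : g ≠ 0) :
    ∃ a ∈ g.support, ∀ b ∈ g.support, pairZ w a ≤ pairZ w b := by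
  classical
  exact Finset.exists_min_image g.support (pairZ w) (Finsupp.support_nonempty_iff.2 hg)

lemma initForm_ne_zero (w : Fin d → ℝ) (g : (Fin d → ℤ) →₀ K) (hg : g ≠ 0) :
    initForm w g ≠ 0 := by
  obtain ⟨a, ha, hmin⟩ := exists_min_supp w g hg
  intro h0
  have := initForm_apply_of w g a hmin
  rw [h0] at this
  exact Finsupp.mem_support_iff.1 ha this.symm

lemma initForm_single (w : Fin d → ℝ) (a : Fin d → ℤ) (c : K) :
    initForm w (Finsupp.single a c) = Finsupp.single a c := by
  classical
  ext b
  rw [initForm, Finsupp.filter_apply]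
  split_ifs with hb
  · rfl
  · by_cases hba : b = a
    · subst hba
      exfalso; apply hb
      intro x hx
      have : x = b := Finset.mem_singleton.1 (Finsupp.support_single_subset hx)
      rw [this]
    · rw [Finsupp.single_eq_of_ne' (Ne.symm hba)]

/-- Multiplicativity of the initial form. -/
lemma initForm_mul (w : Fin d → ℝ) (p q : AddMonoidAlgebra K (Fin d → ℤ))
    (hp : p ≠ 0) (hq : q ≠ 0) :
    initForm w (AMAtoF (p * q)) =
      AMAtoF (F2A (initForm w (AMAtoF p)) * F2A (initForm w (AMAtoF q))) := by
  classical
  obtain ⟨a1, ha1s, ha1⟩ := exists_min_supp w (AMAtoF p) (mt AddMonoidAlgebra.coeff_eq_zero.1 hp)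
  obtain ⟨a2, ha2s, ha2⟩ := exists_min_supp w (AMAtoF q) (mt AddMonoidAlgebra.coeff_eq_zero.1 hq)
  set m : ℝ := pairZ w a1 + pairZ w a2 with hm
  set i1 : AddMonoidAlgebra K (Fin d → ℤ) := F2A (initForm w (AMAtoF p)) with hi1
  set i2 : AddMonoidAlgebra K (Fin d → ℤ) := F2A (initForm w (AMAtoF q)) with hi2
  set r1 : AddMonoidAlgebra K (Fin d → ℤ) :=
    F2A ((AMAtoF p).filter (fun a => ¬ ∀ b ∈ (AMAtoF p).support, pairZ w a ≤ pairZ w b)) with hr1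
  set r2 : AddMonoidAlgebra K (Fin d → ℤ) :=
    F2A ((AMAtoF q).filter (fun a => ¬ ∀ b ∈ (AMAtoF q).support, pairZ w a ≤ pairZ w b)) with hr2
  have hps : p = i1 + r1 := AddMonoidAlgebra.coeff_injective (Finsupp.filter_pos_add_filter_neg (AMAtoF p) _).symm
  have hqs : q = i2 + r2 := AddMonoidAlgebra.coeff_injective (Finsupp.filter_pos_add_filter_neg (AMAtoF q) _).symm
  have hsupp_i1 : ∀ b ∈ (AMAtoF i1).support, pairZ w b = pairZ w a1 := by
    intro b hb
    obtain ⟨hbp, hbmin⟩ := (mem_initForm_support w (AMAtoF p) b).1 hb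
    exact le_antisymm (hbmin a1 ha1s) (ha1 b hbp)
  have hsupp_i2 : ∀ b ∈ (AMAtoF i2).support, pairZ w b = pairZ w a2 := by
    intro b hb
    obtain ⟨hbp, hbmin⟩ := (mem_initForm_support w (AMAtoF q) b).1 hb
    exact le_antisymm (hbmin a2 ha2s) (ha2 b hbp)
  have hsupp_r1 : ∀ b ∈ (AMAtoF r1).support, pairZ w a1 < pairZ w b := by
    intro b hb
    rw [hr1, F2A, AMAtoF, AddMonoidAlgebra.coeff_ofCoeff, Finsupp.support_filter, Finset.mem_filter] at hb
    obtain ⟨hbp, hnb⟩ := hb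
    push_neg at hnb
    obtain ⟨b', hb's, hb'⟩ := hnb
    exact lt_of_le_of_lt (ha1 b' hb's) hb'
  have hsupp_r2 : ∀ b ∈ (AMAtoF r2).support, pairZ w a2 < pairZ w b := by
    intro b hb
    rw [hr2, F2A, AMAtoF, AddMonoidAlgebra.coeff_ofCoeff, Finsupp.support_filter, Finset.mem_filter] at hb
    obtain ⟨hbp, hnb⟩ := hb
    push_neg at hnb
    obtain ⟨b', hb's, hb'⟩ := hnb
    exact lt_of_le_of_lt (ha2 b' hb's) hb'
  have hmulsupp : ∀ (x y : AddMonoidAlgebra K (Fin d → ℤ)), ∀ e ∈ (AMAtoF (x * y)).support,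
      ∃ b ∈ (AMAtoF x).support, ∃ c ∈ (AMAtoF y).support, b + c = e := by
    intro x y e he
    have := AddMonoidAlgebra.support_coeff_mul_subset x y he
    exact Finset.mem_add.1 this
  have hA : ∀ e ∈ (AMAtoF (i1 * i2)).support, pairZ w e = m := by
    intro e he
    obtain ⟨b, hb, c, hc, rfl⟩ := hmulsupp i1 i2 e he
    rw [pairZ_add, hsupp_i1 b hb, hsupp_i2 c hc]
  set C : AddMonoidAlgebra K (Fin d → ℤ) := i1 * r2 + r1 * i2 + r1 * r2 with hC
  have hB : ∀ e ∈ (AMAtoF C).support, m < pairZ w e := by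
    intro e he
    have h1 := Finsupp.support_add (g₁ := AMAtoF (i1 * r2 + r1 * i2)) (g₂ := AMAtoF (r1 * r2)) he
    rw [Finset.mem_union] at h1
    rcases h1 with h1 | h1
    · have h2 := Finsupp.support_add (g₁ := AMAtoF (i1 * r2)) (g₂ := AMAtoF (r1 * i2)) h1
      rw [Finset.mem_union] at h2
      rcases h2 with h2 | h2
      · obtain ⟨b, hb, c, hc, rfl⟩ := hmulsupp i1 r2 e h2
        rw [pairZ_add, hsupp_i1 b hb]
        exact add_lt_add_right (hsupp_r2 c hc) _
      · obtain ⟨b, hb, c, hc, rfl⟩ := hmulsupp r1 i2 e h2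
        rw [pairZ_add, hsupp_i2 c hc]
        exact add_lt_add_left (hsupp_r1 b hb) _
    · obtain ⟨b, hb, c, hc, rfl⟩ := hmulsupp r1 r2 e h1
      rw [pairZ_add]
      exact add_lt_add (hsupp_r1 b hb) (hsupp_r2 c hc)
  have hi12 : i1 * i2 ≠ 0 :=
    mul_ne_zero (fun h0 => initForm_ne_zero w (AMAtoF p) (mt AddMonoidAlgebra.coeff_eq_zero.1 hp) (congrArg AddMonoidAlgebra.coeff h0))
      (fun h0 => initForm_ne_zero w (AMAtoF q) (mt AddMonoidAlgebra.coeff_eq_zero.1 hq) (congrArg AddMonoidAlgebra.coeff h0))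
  obtain ⟨e0, he0⟩ := Finsupp.support_nonempty_iff.2 (mt AddMonoidAlgebra.coeff_eq_zero.1 hi12)
  have he0m : pairZ w e0 = m := hA e0 he0
  have hsplit : p * q = i1 * i2 + C := by rw [hps, hqs, hC]; ring
  have hcoeff : ∀ e, AMAtoF (p * q) e = AMAtoF (i1 * i2) e + AMAtoF C e := by
    intro e
    rw [hsplit]
    rfl
  have hCzero : ∀ e, pairZ w e ≤ m → AMAtoF C e = 0 := by
    intro e he
    by_contra h0
    exact absurd (hB e (Finsupp.mem_support_iff.2 h0)) (not_lt.2 he)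
  have hAzero : ∀ e, pairZ w e ≠ m → AMAtoF (i1 * i2) e = 0 := by
    intro e he
    by_contra h0
    exact he (hA e (Finsupp.mem_support_iff.2 h0))
  have hsupp_pq : ∀ e ∈ (AMAtoF (p * q)).support, m ≤ pairZ w e := by
    intro e he
    rw [Finsupp.mem_support_iff] at he
    by_contra hlt
    push_neg at hlt
    have h1 : AMAtoF (i1 * i2) e = 0 := hAzero e (ne_of_lt hlt)
    have h2 : AMAtoF C e = 0 := hCzero e (le_of_lt hlt)
    exact he (by rw [hcoeff e, h1, h2, add_zero])
  have he0pq : e0 ∈ (AMAtoF (p * q)).support := by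
    rw [Finsupp.mem_support_iff, hcoeff e0, hCzero e0 (le_of_eq he0m), add_zero]
    exact Finsupp.mem_support_iff.1 he0
  ext e
  by_cases hle : pairZ w e ≤ m
  · have hPe : ∀ b ∈ (AMAtoF (p * q)).support, pairZ w e ≤ pairZ w b :=
      fun b hb => le_trans hle (hsupp_pq b hb)
    rw [initForm_apply_of w (AMAtoF (p * q)) e hPe, hcoeff e, hCzero e hle, add_zero]
  · push_neg at hle
    have hPe : ¬ ∀ b ∈ (AMAtoF (p * q)).support, pairZ w e ≤ pairZ w b := by
      intro hall
      exact absurd (hall e0 he0pq) (by rw [he0m]; exact not_le.2 hle)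
    rw [initForm_apply_not w (AMAtoF (p * q)) e hPe]
    exact (hAzero e (ne_of_gt hle)).symm

/-- A divisor of a (nonzero) monomial is a monomial. -/
lemma eq_single_of_mul_eq_single (p s : AddMonoidAlgebra K (Fin d → ℤ))
    (hp : p ≠ 0) (hs : s ≠ 0) (a : Fin d → ℤ) (c : K) (hc : c ≠ 0)
    (hps : p * s = F2A (Finsupp.single a c)) :
    ∃ (b : Fin d → ℤ) (e : K), e ≠ 0 ∧ AMAtoF p = Finsupp.single b e := by
  classical
  have key : ∀ v : Fin d → ℝ, ∀ b1 ∈ (AMAtoF p).support, ∀ b2 ∈ (AMAtoF p).support,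
      pairZ v b1 = pairZ v b2 := by
    intro v b1 hb1 b2 hb2
    have hdecomp : ∀ u : Fin d → ℝ, ∃ b ∈ (initForm u (AMAtoF p)).support,
        ∃ c2 ∈ (initForm u (AMAtoF s)).support, b + c2 = a := by
      intro u
      have h1 : F2A (initForm u (AMAtoF p)) * F2A (initForm u (AMAtoF s)) =
          F2A (Finsupp.single a c) := by
        have h2 := initForm_mul u p s hp hs
        have h3 : initForm u (AMAtoF (p * s)) = Finsupp.single a c := by
          rw [hps]; exact initForm_single u a c
        exact AddMonoidAlgebra.coeff_injective (h2.symm.trans h3)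
      have ha : a ∈ (AMAtoF (F2A (initForm u (AMAtoF p)) * F2A (initForm u (AMAtoF s)))).support := by
        rw [h1]
        show a ∈ (Finsupp.single a c).support
        rw [Finsupp.support_single_ne_zero a hc]
        exact Finset.mem_singleton_self a
      have := AddMonoidAlgebra.support_coeff_mul_subset _ _ ha
      obtain ⟨b, hb, c2, hc2, hbc⟩ := Finset.mem_add.1 this
      exact ⟨b, hb, c2, hc2, hbc⟩
    obtain ⟨bm, hbm, cm, hcm, hsum⟩ := hdecomp v
    obtain ⟨bM, hbM, cM, hcM, hsum'⟩ := hdecomp (-v)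
    obtain ⟨hbmP, hbmin⟩ := (mem_initForm_support v (AMAtoF p) bm).1 hbm
    obtain ⟨hcmP, hcmin⟩ := (mem_initForm_support v (AMAtoF s) cm).1 hcm
    obtain ⟨hbMP, hbmax'⟩ := (mem_initForm_support (-v) (AMAtoF p) bM).1 hbM
    obtain ⟨hcMP, hcmax'⟩ := (mem_initForm_support (-v) (AMAtoF s) cM).1 hcM
    have hbmax : ∀ b ∈ (AMAtoF p).support, pairZ v b ≤ pairZ v bM := by
      intro b hb
      have := hbmax' b hb
      rw [pairZ_neg, pairZ_neg] at this
      linarith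
    have hcmax : ∀ b ∈ (AMAtoF s).support, pairZ v b ≤ pairZ v cM := by
      intro b hb
      have := hcmax' b hb
      rw [pairZ_neg, pairZ_neg] at this
      linarith
    have e1 : pairZ v bm + pairZ v cm = pairZ v a := by rw [← hsum, pairZ_add]
    have e2 : pairZ v bM + pairZ v cM = pairZ v a := by rw [← hsum', pairZ_add]
    have i1 : pairZ v bm ≤ pairZ v bM := hbmin bM hbMP
    have i2 : pairZ v cm ≤ pairZ v cM := hcmin cM hcMP
    have hb1l := hbmin b1 hb1
    have hb1u := hbmax b1 hb1
    have hb2l := hbmin b2 hb2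
    have hb2u := hbmax b2 hb2
    linarith
  have hconst : ∀ b1 ∈ (AMAtoF p).support, ∀ b2 ∈ (AMAtoF p).support, b1 = b2 := by
    intro b1 hb1 b2 hb2
    funext i
    have := key (Pi.single i (1:ℝ)) b1 hb1 b2 hb2
    rw [pairZ_single, pairZ_single] at this
    exact_mod_cast this
  obtain ⟨b0, hb0⟩ := Finsupp.support_nonempty_iff.2 (show AMAtoF p ≠ 0 from (mt AddMonoidAlgebra.coeff_eq_zero.1 hp))
  have hsub : (AMAtoF p).support ⊆ {b0} := by
    intro b hb
    rw [Finset.mem_singleton]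
    exact hconst b hb b0 hb0
  exact ⟨b0, (AMAtoF p) b0, Finsupp.mem_support_iff.1 hb0,
    Finsupp.support_subset_singleton.1 hsub⟩

lemma dotR_isLinear (w : Fin d → ℝ) : IsLinearMap ℝ (dotR w : (Fin d → ℝ) → ℝ) := by
  constructor
  · intro x y
    simp [dotR, mul_add, Finset.sum_add_distrib]
  · intro c x
    simp only [dotR, Pi.smul_apply, smul_eq_mul, Finset.mul_sum]
    exact Finset.sum_congr rfl fun i _ => by ring

/-- Second equivalence: `init_w(h)` is a monomial iff the face is a single point. -/
lemma face_iff (h : AddMonoidAlgebra K (Fin d → ℤ)) (hh0 : h ≠ 0) (w : Fin d → ℝ) :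
    (∃ (a : Fin d → ℤ) (c : K), c ≠ 0 ∧ initForm w (AMAtoF h) = Finsupp.single a c) ↔
      (faceSet w (convexHull ℝ (latt '' ((AMAtoF h).support : Set (Fin d → ℤ))))).Subsingleton := by
  classical
  set S := (AMAtoF h).support with hS
  set pts : Set (Fin d → ℝ) := latt '' (S : Set (Fin d → ℤ)) with hpts
  set Q : Set (Fin d → ℝ) := convexHull ℝ pts with hQ
  have hlatt_mem : ∀ b ∈ S, latt b ∈ Q :=
    fun b hb => subset_convexHull ℝ pts ⟨b, Finset.mem_coe.2 hb, rfl⟩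
  have hlb : ∀ a0 : Fin d → ℤ, (∀ b ∈ S, pairZ w a0 ≤ pairZ w b) →
      ∀ q ∈ Q, pairZ w a0 ≤ dotR w q := by
    intro a0 hmin q hq
    have hsub : Q ⊆ {x | pairZ w a0 ≤ dotR w x} := by
      apply convexHull_min ?_ (convex_halfSpace_ge (dotR_isLinear w) _)
      rintro x ⟨b, hb, rfl⟩
      rw [Set.mem_setOf_eq, dot_latt]
      exact hmin b (Finset.mem_coe.1 hb)
    exact hsub hq
  constructor
  · rintro ⟨a, c, hc, hB⟩
    have hsuppinit : (initForm w (AMAtoF h)).support = {a} := by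
      rw [hB]; exact Finsupp.support_single_ne_zero a hc
    have hamem : a ∈ S ∧ ∀ b ∈ S, pairZ w a ≤ pairZ w b := by
      rw [← mem_initForm_support w (AMAtoF h) a, hsuppinit]
      exact Finset.mem_singleton_self a
    obtain ⟨haS, hamin⟩ := hamem
    have huniq : ∀ b ∈ S, (∀ b' ∈ S, pairZ w b ≤ pairZ w b') → b = a := by
      intro b hb hbmin
      have : b ∈ (initForm w (AMAtoF h)).support :=
        (mem_initForm_support w (AMAtoF h) b).2 ⟨hb, hbmin⟩
      rw [hsuppinit] at this
      exact Finset.mem_singleton.1 this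
    have hstrict : ∀ b ∈ S, b ≠ a → pairZ w a < pairZ w b := by
      intro b hb hba
      rcases lt_or_ge (pairZ w a) (pairZ w b) with hl | hl
      · exact hl
      · exfalso
        apply hba
        apply huniq b hb
        intro b' hb'
        calc pairZ w b ≤ pairZ w a := hl
          _ ≤ pairZ w b' := hamin b' hb'
    apply Set.Subsingleton.anti Set.subsingleton_singleton
    intro q hq
    obtain ⟨hqQ, hqmin⟩ := hq
    have hq1 : dotR w q = pairZ w a := by
      apply le_antisymm
      · rw [← dot_latt]; exact hqmin (latt a) (hlatt_mem a haS)
      · exact hlb a hamin q hqQ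
    have hfin : pts.Finite := S.finite_toSet.image latt
    rw [hQ, hfin.convexHull_eq] at hqQ
    obtain ⟨lam, hlam0, hlam1, hcm⟩ := hqQ
    set T := hfin.toFinset with hT
    have hqsum : q = ∑ y ∈ T, lam y • y := by
      rw [← hcm, Finset.centerMass_eq_of_sum_1 T id hlam1]
      simp
    have hdot : dotR w q = ∑ y ∈ T, lam y * dotR w y := by
      set L := IsLinearMap.mk' _ (dotR_isLinear w) with hL
      have hLd : ∀ x, dotR w x = L x := fun x => rfl
      rw [hLd, hqsum, map_sum]
      exact Finset.sum_congr rfl fun y _ => by rw [map_smul, smul_eq_mul, hLd]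
    have key0 : ∑ y ∈ T, lam y * (dotR w y - pairZ w a) = 0 := by
      have h2 : ∑ y ∈ T, lam y * (dotR w y - pairZ w a)
          = (∑ y ∈ T, lam y * dotR w y) - (∑ y ∈ T, lam y) * pairZ w a := by
        rw [Finset.sum_mul, ← Finset.sum_sub_distrib]
        exact Finset.sum_congr rfl fun y _ => by ring
      rw [h2, ← hdot, hlam1, one_mul, hq1, sub_self]
    have hnneg : ∀ y ∈ T, 0 ≤ lam y * (dotR w y - pairZ w a) := by
      intro y hy
      have hypts : y ∈ pts := hfin.mem_toFinset.1 hy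
      obtain ⟨b, hbS, rfl⟩ := hypts
      have hge : pairZ w a ≤ dotR w (latt b) := by
        rw [dot_latt]; exact hamin b (Finset.mem_coe.1 hbS)
      exact mul_nonneg (hlam0 _ ⟨b, hbS, rfl⟩) (by linarith)
    have hzero := (Finset.sum_eq_zero_iff_of_nonneg hnneg).1 key0
    have hlam_zero : ∀ y ∈ T, y ≠ latt a → lam y = 0 := by
      intro y hy hne
      obtain ⟨b, hbS, rfl⟩ := hfin.mem_toFinset.1 hy
      have hba : b ≠ a := fun e => hne (by rw [e])
      have hstr := hstrict b (Finset.mem_coe.1 hbS) hba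
      rcases mul_eq_zero.1 (hzero _ hy) with h0 | h0
      · exact h0
      · exfalso
        rw [dot_latt] at h0
        linarith
    have hlattaT : latt a ∈ T := hfin.mem_toFinset.2 ⟨a, Finset.mem_coe.2 haS, rfl⟩
    have hla1 : lam (latt a) = 1 := by
      rw [← hlam1]
      exact (Finset.sum_eq_single_of_mem (latt a) hlattaT
        (fun y hy hne => hlam_zero y hy hne)).symm
    have : q = latt a := by
      rw [hqsum, Finset.sum_eq_single_of_mem (latt a) hlattaT
        (fun y hy hne => by rw [hlam_zero y hy hne, zero_smul]), hla1, one_smul]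
    rw [this]
    exact rfl
  · intro hsub
    have hinit0 := initForm_ne_zero w (AMAtoF h) (mt AddMonoidAlgebra.coeff_eq_zero.1 hh0)
    obtain ⟨a, ha⟩ := Finsupp.support_nonempty_iff.2 hinit0
    have hface : ∀ b ∈ (initForm w (AMAtoF h)).support, latt b ∈ faceSet w Q := by
      intro b hb
      obtain ⟨hbS, hbmin⟩ := (mem_initForm_support w (AMAtoF h) b).1 hb
      exact ⟨hlatt_mem b hbS, fun p hp => by rw [dot_latt]; exact hlb b hbmin p hp⟩
    have hsubs : (initForm w (AMAtoF h)).support ⊆ {a} := by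
      intro b hb
      rw [Finset.mem_singleton]
      exact latt_inj (hsub (hface b hb) (hface a ha))
    exact ⟨a, initForm w (AMAtoF h) a, Finsupp.mem_support_iff.1 ha,
      Finsupp.support_subset_singleton.1 hsubs⟩

end Aux

/-- For the principal ideal generated by a Laurent polynomial `h` which is not
a monomial, membership of `w` in the tropical variety `T(⟨h⟩)` (i.e. `init_w⟨h⟩` contains no
monomial) is equivalent to `init_w(h)` not being a monomial, which in turn is equivalent to
the face of the Newton polytope `N(h)` in direction `w` having at least two points. -/
theorem stmt4 {K : Type*} [Field K] {d : ℕ} (h : AddMonoidAlgebra K (Fin d → ℤ))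
    (hh0 : h ≠ 0)
    (hmono : ¬ ∃ (a : Fin d → ℤ) (c : K), AMAtoF h = Finsupp.single a c)
    (w : Fin d → ℝ) :
    ((¬ ∃ (a : Fin d → ℤ) (c : K) (g : AddMonoidAlgebra K (Fin d → ℤ)), c ≠ 0 ∧
        AMAtoF g = Finsupp.single a c ∧
        g ∈ Ideal.span {g' : AddMonoidAlgebra K (Fin d → ℤ) |
          ∃ f ∈ Ideal.span {h}, f ≠ 0 ∧ AMAtoF g' = initForm w (AMAtoF f)}) ↔
      ¬ ∃ (a : Fin d → ℤ) (c : K), c ≠ 0 ∧ initForm w (AMAtoF h) = Finsupp.single a c) ∧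
    ((¬ ∃ (a : Fin d → ℤ) (c : K), c ≠ 0 ∧ initForm w (AMAtoF h) = Finsupp.single a c) ↔
      ¬ (faceSet w (convexHull ℝ (latt '' ((AMAtoF h).support : Set (Fin d → ℤ))))).Subsingleton) := by
  classical
  constructor
  · apply not_congr
    constructor
    · rintro ⟨a, c, g, hc, hg, hmem⟩
      set ih : AddMonoidAlgebra K (Fin d → ℤ) := F2A (initForm w (AMAtoF h)) with hih
      have hle : Ideal.span {g' : AddMonoidAlgebra K (Fin d → ℤ) |
          ∃ f ∈ Ideal.span {h}, f ≠ 0 ∧ AMAtoF g' = initForm w (AMAtoF f)} ≤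
          Ideal.span {ih} := by
        rw [Ideal.span_le]
        rintro g' ⟨f, hf, hf0, hfi⟩
        obtain ⟨u, hu⟩ := Ideal.mem_span_singleton.1 hf
        have hu0 : u ≠ 0 := fun h0 => hf0 (by rw [hu, h0, mul_zero])
        have hg' : g' = ih * F2A (initForm w (AMAtoF u)) := by
          have : AMAtoF g' = AMAtoF (ih * F2A (initForm w (AMAtoF u))) := by
            rw [hfi, hu]
            exact initForm_mul w h u hh0 hu0
          exact AddMonoidAlgebra.coeff_injective this
        rw [SetLike.mem_coe, Ideal.mem_span_singleton]
        exact ⟨F2A (initForm w (AMAtoF u)), hg'⟩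
      obtain ⟨s, hs⟩ := Ideal.mem_span_singleton.1 (hle hmem)
      have hih0 : ih ≠ 0 := fun h0 => initForm_ne_zero w (AMAtoF h) (mt AddMonoidAlgebra.coeff_eq_zero.1 hh0) (congrArg AddMonoidAlgebra.coeff h0)
      have hsingle0 : (Finsupp.single a c : (Fin d → ℤ) →₀ K) ≠ 0 :=
        fun h0 => hc (Finsupp.single_eq_zero.1 h0)
      have hgne : g ≠ 0 := fun h0 => hsingle0 (by rw [← hg, h0]; rfl)
      have hs0 : s ≠ 0 := fun h0 => hgne (by rw [hs, h0, mul_zero])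
      have hps : ih * s = F2A (Finsupp.single a c) := by
        rw [← hs]
        exact AddMonoidAlgebra.coeff_injective hg
      obtain ⟨b, e, he, hbe⟩ := eq_single_of_mul_eq_single ih s hih0 hs0 a c hc hps
      exact ⟨b, e, he, hbe⟩
    · rintro ⟨a, c, hc, hB⟩
      exact ⟨a, c, F2A (initForm w (AMAtoF h)), hc, hB,
        Ideal.subset_span ⟨h, Ideal.mem_span_singleton_self h, hh0, rfl⟩⟩
  · exact not_congr (face_iff h hh0 w)
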